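/- The third-order Lyness map G₁(x,y,z) = (y, z, (1 + y + z)/x) on ℂ³ (case a = 1) is 8-periodic: G₁^8 = Id wherever the iterates are defined. -/
import Mathlib


/-- The third-order Lyness map `G₁(x,y,z) = (y, z, (1+y+z)/x)` on `ℂ³`
(case `a = 1`) is 8-periodic: `G₁^8 = Id` wherever the iterates are
defined. -/
theorem stmt_19 :
    ∀ w : ℂ × ℂ × ℂ,
      (∀ i : ℕ, i < 8 →
        ((fun v : ℂ × ℂ × ℂ =>
            (v.2.1, v.2.2, (1 + v.2.1 + v.2.2) / v.1))^[i] w).1 ≠ 0) →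
      (fun v : ℂ × ℂ × ℂ =>
          (v.2.1, v.2.2, (1 + v.2.1 + v.2.2) / v.1))^[8] w = w := by
  rintro ⟨x, y, z⟩ h
  set f : ℂ × ℂ × ℂ → ℂ × ℂ × ℂ :=
    fun v => (v.2.1, v.2.2, (1 + v.2.1 + v.2.2) / v.1) with hf
  have hx : x ≠ 0 := h 0 (by norm_num)
  have hy : y ≠ 0 := by
    have := h 1 (by norm_num)
    simpa [hf] using this
  have hz : z ≠ 0 := by
    have := h 2 (by norm_num)
    simpa [hf, Function.iterate_succ_apply', hy] using this
  have e1 : f^[1] (x, y, z) = (y, z, (1 + y + z) / x) := rfl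
  have e2 : f^[2] (x, y, z) =
      (z, (1 + y + z) / x, (1 + x + y + z + x * z) / (x * y)) := by
    rw [Function.iterate_succ_apply', e1, hf]
    simp only [Prod.mk.injEq, eq_self_iff_true, true_and]
    field_simp
    ring
  have e3 : f^[3] (x, y, z) =
      ((1 + y + z) / x, (1 + x + y + z + x * z) / (x * y),
        (1 + y + z) * (1 + x + y) / (x * y * z)) := by
    rw [Function.iterate_succ_apply', e2, hf]
    simp only [Prod.mk.injEq, eq_self_iff_true, true_and]
    field_simp
    ring
  have hA : (1 : ℂ) + y + z ≠ 0 := by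
    have := h 3 (by norm_num)
    rw [e3] at this
    simp only [ne_eq, div_eq_zero_iff, not_or] at this
    exact this.1
  have e4 : f^[4] (x, y, z) =
      ((1 + x + y + z + x * z) / (x * y),
        (1 + y + z) * (1 + x + y) / (x * y * z),
        (1 + x + y + z + x * z) / (y * z)) := by
    rw [Function.iterate_succ_apply', e3, hf]
    simp only [Prod.mk.injEq, eq_self_iff_true, true_and]
    rw [div_div_eq_mul_div, div_eq_div_iff hA (mul_ne_zero hy hz)]
    field_simp
    ring
  have hB : (1 : ℂ) + x + y + z + x * z ≠ 0 := by
    have := h 4 (by norm_num)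
    rw [e4] at this
    simp only [ne_eq, div_eq_zero_iff, not_or] at this
    exact this.1
  have e5 : f^[5] (x, y, z) =
      ((1 + y + z) * (1 + x + y) / (x * y * z),
        (1 + x + y + z + x * z) / (y * z), (1 + x + y) / z) := by
    rw [Function.iterate_succ_apply', e4, hf]
    simp only [Prod.mk.injEq, eq_self_iff_true, true_and]
    rw [div_div_eq_mul_div, div_eq_div_iff hB hz]
    field_simp
    ring
  have hC : (1 : ℂ) + x + y ≠ 0 := by
    have := h 5 (by norm_num)
    rw [e5] at this
    simp only [ne_eq, div_eq_zero_iff, mul_eq_zero, not_or] at this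
    exact this.1.2
  have e6 : f^[6] (x, y, z) =
      ((1 + x + y + z + x * z) / (y * z), (1 + x + y) / z, x) := by
    rw [Function.iterate_succ_apply', e5, hf]
    simp only [Prod.mk.injEq, eq_self_iff_true, true_and]
    rw [div_div_eq_mul_div, div_eq_iff (mul_ne_zero hA hC)]
    field_simp
    ring
  have e7 : f^[7] (x, y, z) = ((1 + x + y) / z, x, y) := by
    rw [Function.iterate_succ_apply', e6, hf]
    simp only [Prod.mk.injEq, eq_self_iff_true, true_and]
    rw [div_div_eq_mul_div, div_eq_iff hB]
    field_simp
    ring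
  rw [Function.iterate_succ_apply', e7, hf]
  refine Prod.ext rfl (Prod.ext rfl ?_)
  show (1 + x + y) / ((1 + x + y) / z) = z
  rw [div_div_eq_mul_div, mul_comm, mul_div_assoc, div_self hC, mul_one]
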